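/- Let $H \in \mathbb{C}^{n\times n}$ be invertible and let $p(z) = (z-r_1)\cdots(z-r_k)$ be a monic polynomial with nonzero values on the spectrum of $H$. Suppose $p(H) = QR$ is the QR decomposition (Q unitary, R upper triangular with positive diagonal). Then $\|e_n^* p(H)^{-1}\|^{-1} = R_{nn}$, where $e_n$ is the last standard basis vector. -/

import Mathlib

open Polynomial Matrix

/-- The Euclidean norm of the last row of a matrix, i.e. `‖eₙ* A‖`. -/
noncomputable def rowNorm {n : ℕ} (A : Matrix (Fin (n + 1)) (Fin (n + 1)) ℂ) : ℝ :=
  Real.sqrt (∑ j, ‖A (Fin.last n) j‖ ^ 2)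

/-- `M = Q R` is a QR decomposition: `Q` unitary, `R` upper triangular with
strictly positive (real) diagonal entries. -/
def IsQR {n : ℕ} (M Q R : Matrix (Fin n) (Fin n) ℂ) : Prop :=
  M = Q * R ∧ Q ∈ Matrix.unitaryGroup (Fin n) ℂ ∧ R.BlockTriangular id ∧
  ∀ i, 0 < (R i i).re ∧ (R i i).im = 0

/-- If `H` is invertible, `p(z) = (z - r₁)⋯(z - r_k)` is nonzero on the spectrum of `H`,
and `p(H) = QR` is the QR decomposition, then `‖eₙ* p(H)⁻¹‖⁻¹ = R_{nn}`. -/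
theorem stmt0 {n k : ℕ} (H : Matrix (Fin (n + 1)) (Fin (n + 1)) ℂ) (hH : IsUnit H)
    (r : Fin k → ℂ) (p : ℂ[X]) (hp : p = ∏ i, (X - C (r i)))
    (hnz : ∀ lam ∈ spectrum ℂ H, p.eval lam ≠ 0)
    (Q R : Matrix (Fin (n + 1)) (Fin (n + 1)) ℂ)
    (hQR : IsQR (aeval H p) Q R) :
    ((rowNorm ((aeval H p)⁻¹))⁻¹ : ℂ) = R (Fin.last n) (Fin.last n) := by
  obtain ⟨hA, hQ, hRtri, hRdiag⟩ := hQR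
  set N := Fin.last n with hN
  -- `aeval H p` is a unit
  have hAu : IsUnit (aeval H p) := by
    rw [hp]
    refine Finset.prod_induction _ (fun q => IsUnit (aeval H q))
      (fun a b ha hb => by
        show IsUnit (aeval H (a * b)); rw [_root_.map_mul]; exact ha.mul hb)
      (by show IsUnit (aeval H (1 : ℂ[X])); rw [_root_.map_one]; exact isUnit_one)
      (fun i _ => ?_)
    have hmem : r i ∉ spectrum ℂ H := by
      intro hmem
      apply hnz (r i) hmem
      rw [hp, eval_prod]
      exact Finset.prod_eq_zero (Finset.mem_univ i) (by simp)
    have := spectrum.notMem_iff.mp hmem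
    have : IsUnit (-(algebraMap ℂ _ (r i) - H)) := this.neg
    rw [neg_sub] at this
    simpa using this
  have hdetA : (aeval H p).det ≠ 0 := by
    intro h
    exact (Matrix.isUnit_iff_isUnit_det _ |>.mp hAu).ne_zero h
  have hdetR : IsUnit R.det := by
    rw [isUnit_iff_ne_zero]
    intro h
    apply hdetA
    rw [hA, Matrix.det_mul, h, mul_zero]
  -- unitary facts
  have hQl : star Q * Q = 1 := (Unitary.mem_iff.mp hQ).1
  -- inverse of A
  have hAinv : (aeval H p)⁻¹ = R⁻¹ * star Q := by
    apply Matrix.inv_eq_left_inv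
    rw [hA, Matrix.mul_assoc, ← Matrix.mul_assoc (star Q), hQl, Matrix.one_mul,
      Matrix.nonsing_inv_mul R hdetR]
  have hRNN : R N N ≠ 0 := by
    intro h
    have := (hRdiag N).1
    rw [h] at this
    simp at this
  -- last row of R is supported on the last entry
  have hRrow : ∀ j, j ≠ N → R N j = 0 := by
    intro j hj
    exact hRtri (by
      simp only [id]
      exact lt_of_le_of_ne (Fin.le_last j) hj)
  -- entries of R⁻¹'s last row
  have hRinv : ∀ j, R⁻¹ N j = (R N N)⁻¹ * (if N = j then 1 else 0) := by
    intro j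
    have h1 : (R * R⁻¹) N j = (1 : Matrix (Fin (n+1)) (Fin (n+1)) ℂ) N j := by
      rw [Matrix.mul_nonsing_inv R hdetR]
    rw [Matrix.mul_apply] at h1
    rw [Finset.sum_eq_single N (fun m _ hm => by rw [hRrow m hm, zero_mul])
      (fun h => absurd (Finset.mem_univ N) h)] at h1
    rw [Matrix.one_apply] at h1
    rw [← h1]
    exact (inv_mul_cancel_left₀ hRNN _).symm
  -- entries of the last row of A⁻¹
  have hAinvrow : ∀ j, (aeval H p)⁻¹ N j = (R N N)⁻¹ * (starRingEnd ℂ) (Q j N) := by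
    intro j
    rw [hAinv, Matrix.mul_apply]
    rw [Finset.sum_eq_single N (fun m _ hm => by rw [hRinv m, if_neg (Ne.symm hm)]; ring)
      (fun h => absurd (Finset.mem_univ N) h)]
    rw [hRinv N, if_pos rfl, mul_one]
    rw [Matrix.star_eq_conjTranspose, Matrix.conjTranspose_apply]
    rfl
  -- norm of the last column of Q is 1
  have hQcol : ∑ j, ‖Q j N‖ ^ 2 = 1 := by
    have h1 : (star Q * Q) N N = 1 := by rw [hQl]; simp [Matrix.one_apply]
    rw [Matrix.mul_apply] at h1
    have h2 : ∀ j, (star Q) N j * Q j N = ((‖Q j N‖ ^ 2 : ℝ) : ℂ) := by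
      intro j
      rw [Matrix.star_eq_conjTranspose, Matrix.conjTranspose_apply, Complex.sq_norm,
        Complex.star_def, ← Complex.normSq_eq_conj_mul_self]
    rw [Finset.sum_congr rfl (fun j _ => h2 j), ← Complex.ofReal_sum] at h1
    exact_mod_cast h1
  -- compute the row norm
  have habsR : ‖R N N‖ = (R N N).re := by
    have hre : R N N = (((R N N).re : ℝ) : ℂ) := Complex.ext rfl (by simp [(hRdiag N).2])
    rw [hre, Complex.norm_real, Real.norm_eq_abs, abs_of_pos (hRdiag N).1, Complex.ofReal_re]
  have hrow : rowNorm ((aeval H p)⁻¹) = ((R N N).re)⁻¹ := by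
    unfold rowNorm
    rw [← hN]
    have h3 : ∀ j, ‖(aeval H p)⁻¹ N j‖ ^ 2
        = (‖R N N‖)⁻¹ ^ 2 * ‖Q j N‖ ^ 2 := by
      intro j
      rw [hAinvrow j, norm_mul, norm_inv, mul_pow, Complex.norm_conj]
    rw [Finset.sum_congr rfl (fun j _ => h3 j), ← Finset.mul_sum, hQcol, mul_one,
      Real.sqrt_sq (inv_nonneg.mpr (norm_nonneg _)), habsR]
  rw [hrow, ← Complex.ofReal_inv, inv_inv]
  apply Complex.ext
  · simp
  · simp [(hRdiag N).2]
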